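/- arXiv:1706.08252 — 2 statements merged into one kernel-verified Lean document; each statement's English description precedes it below -/
import Mathlib

section
/- Let H(m,p) = (1/β)|p|^β/(m+μ)^α with μ > 0, 1 < β ≤ 2 and 0 < α ≤ 4(β-1)/β. Then for all m ≥ 0, z ≥ -m, p, r ∈ ℝ^N with (z,r) ≠ (0,0), setting m_s = m + s z and p_s = p + s r, the function h(s) = -z H(m_s, p_s) + m_s ∇_p H(m_s, p_s)·r is nondecreasing on [0,1]. -/
open Real Set

-- helper: (x^2)^(e/2) = x^e for x ≥ 0
lemma sq_rpow_half {x : ℝ} (hx : 0 ≤ x) (e : ℝ) : ((x ^ 2 : ℝ)) ^ (e / 2) = x ^ e := by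
  rw [← Real.rpow_two, ← Real.rpow_mul hx, mul_div_cancel₀ e (by norm_num : (2:ℝ) ≠ 0)]

set_option maxHeartbeats 2000000 in
/-- For the model Hamiltonian `H(m,p) = (1/β)|p|^β/(m+μ)^α` with `μ > 0`, `1 < β ≤ 2`,
`0 < α ≤ 4(β-1)/β`, the function
`h(s) = -z H(m_s,p_s) + m_s ∇_p H(m_s,p_s)·r` is nondecreasing on `[0,1]`. -/
theorem stmt6 (N : ℕ) (hN : 1 ≤ N) (μ α β : ℝ) (hμ : 0 < μ) (hβ1 : 1 < β) (hβ2 : β ≤ 2)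
    (hα0 : 0 < α) (hα : α ≤ 4 * (β - 1) / β)
    (m z : ℝ) (p r : EuclideanSpace ℝ (Fin N)) (hm : 0 ≤ m) (hz : -m ≤ z)
    (hzr : (z, r) ≠ (0, 0)) :
    MonotoneOn (fun s : ℝ =>
      -z * ((1 / β) * ‖p + s • r‖ ^ β / (m + s * z + μ) ^ α)
        + (m + s * z) *
          (inner ℝ ((‖p + s • r‖ ^ (β - 2) / (m + s * z + μ) ^ α) • (p + s • r)) r : ℝ))
      (Set.Icc 0 1) := by
  have hβ0 : (0:ℝ) < β := by linarith
  set q : ℝ → ℝ := fun s => inner ℝ p r + s * ‖r‖ ^ 2 with hq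
  set w : ℝ → ℝ := fun s => ‖p‖ ^ 2 + 2 * (inner ℝ p r : ℝ) * s + ‖r‖ ^ 2 * s ^ 2 with hw
  set c : ℝ → ℝ := fun s => m + s * z + μ with hc
  set F : ℝ → ℝ := fun s =>
    -(z / β) * (w s ^ (β / 2) * c s ^ (-α))
      + (m + s * z) * (w s ^ ((β - 2) / 2) * q s * c s ^ (-α)) with hF
  clear_value F c w q
  -- basic identities
  have hwv : ∀ s : ℝ, w s = ‖p + s • r‖ ^ 2 := by
    intro s
    rw [hw]
    rw [norm_add_sq_real, real_inner_smul_right, norm_smul]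
    simp only [mul_pow, sq_abs, Real.norm_eq_abs]
    ring
  have hqv : ∀ s : ℝ, q s = (inner ℝ (p + s • r) r : ℝ) := by
    intro s
    rw [hq, inner_add_left, real_inner_smul_left, real_inner_self_eq_norm_sq]
  have hw0 : ∀ s : ℝ, 0 ≤ w s := fun s => by rw [hwv s]; positivity
  have hCS : ∀ s : ℝ, q s ^ 2 ≤ w s * ‖r‖ ^ 2 := by
    intro s
    rw [hqv s, hwv s]
    have := abs_real_inner_le_norm (p + s • r) r
    nlinarith [abs_nonneg (inner ℝ (p + s • r) r : ℝ), sq_abs (inner ℝ (p + s • r) r : ℝ)]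
  have hq0 : ∀ s : ℝ, w s = 0 → q s = 0 := by
    intro s hws
    rw [hwv s] at hws
    have hv : p + s • r = 0 := by
      have := pow_eq_zero_iff (n := 2) (by norm_num) |>.mp hws
      exact norm_eq_zero.mp this
    rw [hqv s, hv, inner_zero_left]
  have hcs : ∀ s ∈ Icc (0:ℝ) 1, 0 < c s := by
    intro s hs
    have h1 : 0 ≤ s * (z + m) := mul_nonneg hs.1 (by linarith)
    have h2 : 0 ≤ (1 - s) * m := mul_nonneg (by linarith [hs.2]) hm
    simp only [hc]
    nlinarith
  have hms : ∀ s ∈ Icc (0:ℝ) 1, 0 ≤ m + s * z := by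
    intro s hs
    have h1 : 0 ≤ s * (z + m) := mul_nonneg hs.1 (by linarith)
    have h2 : 0 ≤ (1 - s) * m := mul_nonneg (by linarith [hs.2]) hm
    nlinarith
  -- the goal function equals F on [0,1]
  have hEq : ∀ s ∈ Icc (0:ℝ) 1,
      -z * ((1 / β) * ‖p + s • r‖ ^ β / (m + s * z + μ) ^ α)
        + (m + s * z) *
          (inner ℝ ((‖p + s • r‖ ^ (β - 2) / (m + s * z + μ) ^ α) • (p + s • r)) r : ℝ) = F s := by
    intro s hs
    have hc0 : (0:ℝ) < c s := hcs s hs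
    have hnb : ‖p + s • r‖ ^ β = w s ^ (β / 2) := by
      rw [hwv s, sq_rpow_half (norm_nonneg _)]
    have hnb2 : ‖p + s • r‖ ^ (β - 2) = w s ^ ((β - 2) / 2) := by
      rw [hwv s, sq_rpow_half (norm_nonneg _)]
    rw [real_inner_smul_left, hnb, hnb2, ← hqv s]
    simp only [hF]
    rw [show m + s * z + μ = c s from by rw [hc], Real.rpow_neg hc0.le α]
    ring
  -- continuity of F on [0,1]
  have hwc : Continuous w := by rw [hw]; fun_prop
  have hqc : Continuous q := by rw [hq]; fun_prop
  have hcc : Continuous c := by rw [hc]; fun_prop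
  have hA : ContinuousOn (fun s => w s ^ (β / 2)) (Icc (0:ℝ) 1) :=
    hwc.continuousOn.rpow_const (fun x _ => Or.inr (by linarith : (0:ℝ) ≤ β / 2))
  have hCct : ContinuousOn (fun s => c s ^ (-α)) (Icc (0:ℝ) 1) :=
    hcc.continuousOn.rpow_const (fun x hx => Or.inl (ne_of_gt (hcs x hx)))
  have hGb : ∀ s : ℝ, ‖w s ^ ((β - 2) / 2) * q s‖ ≤ w s ^ ((β - 1) / 2) * ‖r‖ := by
    intro s
    rw [Real.norm_eq_abs]
    by_cases hws : w s = 0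
    · rw [hws, hq0 s hws, mul_zero, abs_zero,
        Real.zero_rpow (by intro h; rw [div_eq_zero_iff] at h; rcases h with h|h <;> linarith)]
      simp
    · have hwpos : 0 < w s := (hw0 s).lt_of_ne (Ne.symm hws)
      have h2 : (w s ^ ((1:ℝ)/2)) ^ 2 = w s := by
        rw [← Real.rpow_two, ← Real.rpow_mul (hw0 s)]
        norm_num
      have hqb : |q s| ≤ w s ^ ((1:ℝ)/2) * ‖r‖ := by
        apply abs_le.mpr
        apply abs_le_of_sq_le_sq' _ (by positivity)
        rw [mul_pow, h2]
        exact hCS s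
      calc |w s ^ ((β - 2) / 2) * q s| = w s ^ ((β - 2) / 2) * |q s| := by
            rw [abs_mul, abs_of_nonneg (Real.rpow_nonneg (hw0 s) _)]
        _ ≤ w s ^ ((β - 2) / 2) * (w s ^ ((1:ℝ)/2) * ‖r‖) :=
            mul_le_mul_of_nonneg_left hqb (Real.rpow_nonneg (hw0 s) _)
        _ = w s ^ ((β - 1) / 2) * ‖r‖ := by
            rw [← mul_assoc, ← Real.rpow_add hwpos,
              show (β - 2) / 2 + (1:ℝ)/2 = (β - 1) / 2 by ring]
  have hG : ContinuousOn (fun s => w s ^ ((β - 2) / 2) * q s) (Icc (0:ℝ) 1) := by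
    intro x hx
    by_cases hwx : w x = 0
    · have hGx : w x ^ ((β - 2) / 2) * q x = 0 := by rw [hq0 x hwx, mul_zero]
      show Filter.Tendsto (fun s => w s ^ ((β - 2) / 2) * q s) (nhdsWithin x (Icc (0:ℝ) 1))
        (nhds (w x ^ ((β - 2) / 2) * q x))
      rw [hGx]
      apply squeeze_zero_norm hGb
      have hb : ContinuousWithinAt (fun s => w s ^ ((β - 1) / 2) * ‖r‖) (Icc (0:ℝ) 1) x :=
        ((hwc.continuousAt.rpow_const (Or.inr (by linarith : (0:ℝ) ≤ (β - 1) / 2))).mul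
          continuousAt_const).continuousWithinAt
      have hbx : w x ^ ((β - 1) / 2) * ‖r‖ = 0 := by
        rw [hwx, Real.zero_rpow (by intro h; rw [div_eq_zero_iff] at h; rcases h with h|h <;> linarith),
          zero_mul]
      have hb' : Filter.Tendsto (fun s => w s ^ ((β - 1) / 2) * ‖r‖) (nhdsWithin x (Icc (0:ℝ) 1))
          (nhds (w x ^ ((β - 1) / 2) * ‖r‖)) := hb
      rwa [hbx] at hb'
    · exact ((hwc.continuousAt.rpow_const (Or.inl hwx)).mul hqc.continuousAt).continuousWithinAt
  have hFc : ContinuousOn F (Icc (0:ℝ) 1) := by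
    rw [hF]
    apply ContinuousOn.add
    · exact continuousOn_const.mul (hA.mul hCct)
    · exact (Continuous.continuousOn (by fun_prop)).mul (hG.mul hCct)
  -- derivative of F is nonnegative where w ≠ 0
  have hkey : ∀ s ∈ Icc (0:ℝ) 1, w s ≠ 0 → ∃ d, HasDerivAt F d s ∧ 0 ≤ d := by
    intro s hs hws
    have hwpos : 0 < w s := (hw0 s).lt_of_ne (Ne.symm hws)
    have hc0 : 0 < c s := hcs s hs
    have hm0 : 0 ≤ m + s * z := hms s hs
    have hid : HasDerivAt (fun t : ℝ => t) 1 s := hasDerivAt_id s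
    have hsq : HasDerivAt (fun t : ℝ => t ^ 2) (2 * s) s := by
      simpa using hasDerivAt_pow 2 s
    have hw' : HasDerivAt w (2 * q s) s := by
      rw [hw]
      have h := ((hasDerivAt_const s (‖p‖ ^ 2)).add
        (hid.const_mul (2 * (inner ℝ p r : ℝ)))).add (hsq.const_mul (‖r‖ ^ 2))
      convert h using 1
      · rfl
      · rfl
      · funext t; simp only [Pi.add_apply]
      simp only [hq]; ring
    have hq' : HasDerivAt q (‖r‖ ^ 2) s := by
      rw [hq]
      have h := (hasDerivAt_const s (inner ℝ p r : ℝ)).add (hid.mul_const (‖r‖ ^ 2))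
      convert h using 1
      · rfl
      · rfl
      · funext t; simp only [Pi.add_apply]
      ring
    have hc' : HasDerivAt c z s := by
      rw [hc]
      have h := ((hid.mul_const z).const_add m).add_const μ
      convert h using 1
      · rfl
      · rfl
      ring
    have hM : HasDerivAt (fun t : ℝ => m + t * z) z s := by
      have h := (hid.mul_const z).const_add m
      convert h using 1
      · rfl
      · rfl
      ring
    have hA' := hw'.rpow_const (p := β / 2) (Or.inl hws)
    have hB' := hw'.rpow_const (p := (β - 2) / 2) (Or.inl hws)
    have hC' := hc'.rpow_const (p := -α) (Or.inl (ne_of_gt hc0))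
    have hFd := ((hA'.mul hC').const_mul (-(z / β))).add (hM.mul ((hB'.mul hq').mul hC'))
    -- clean derivative value
    have hMC : m + s * z ≤ c s := by simp only [hc]; linarith
    have habβ : α * β ≤ 4 * (β - 1) := by
      rw [div_eq_mul_inv] at hα
      calc α * β ≤ (4 * (β - 1) * β⁻¹) * β := by
            apply mul_le_mul_of_nonneg_right hα hβ0.le
        _ = 4 * (β - 1) := by field_simp
    have h4 : α * β * (m + s * z) ≤ 4 * (β - 1) * c s := by
      nlinarith [mul_le_mul_of_nonneg_left hMC (by positivity : (0:ℝ) ≤ α * β)]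
    have ht1 : 0 ≤ α * β * ((m + s * z) * c s) * (w s * ‖r‖ ^ 2 - q s ^ 2) := by
      apply mul_nonneg
      · positivity
      · linarith [hCS s]
    have ht2 : 0 ≤ q s ^ 2 * (α * β * (m + s * z) * (4 * (β - 1) * c s - α * β * (m + s * z))) := by
      apply mul_nonneg (sq_nonneg _)
      apply mul_nonneg (by positivity)
      linarith
    have hbβ : 0 ≤ α * z ^ 2 * w s ^ 2
        + β * (((β - 2) * q s ^ 2 + w s * ‖r‖ ^ 2) * ((m + s * z) * c s))
        - α * β * z * ((m + s * z) * (w s * q s)) := by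
      nlinarith [sq_nonneg (2 * α * z * w s - α * β * (m + s * z) * q s), ht1, ht2, hα0]
    refine ⟨w s ^ ((β - 4) / 2) * c s ^ (-α - 1) / β *
      (α * z ^ 2 * w s ^ 2
        + β * (((β - 2) * q s ^ 2 + w s * ‖r‖ ^ 2) * ((m + s * z) * c s))
        - α * β * z * ((m + s * z) * (w s * q s))), ?_, ?_⟩
    · have e1 : w s ^ (β / 2) = w s ^ ((β - 4) / 2) * w s ^ 2 := by
        have h := Real.rpow_add hwpos ((β - 4) / 2) 2
        rw [Real.rpow_two] at h
        rw [← h]; congr 1; ring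
      have e2 : w s ^ (β / 2 - 1) = w s ^ ((β - 4) / 2) * w s := by
        have h := Real.rpow_add hwpos ((β - 4) / 2) 1
        rw [Real.rpow_one] at h
        rw [← h]; congr 1; ring
      have e3 : w s ^ ((β - 2) / 2) = w s ^ ((β - 4) / 2) * w s := by
        have h := Real.rpow_add hwpos ((β - 4) / 2) 1
        rw [Real.rpow_one] at h
        rw [← h]; congr 1; ring
      have e4 : w s ^ ((β - 2) / 2 - 1) = w s ^ ((β - 4) / 2) := by
        congr 1; ring
      have e5 : c s ^ (-α) = c s ^ (-α - 1) * c s := by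
        have h := Real.rpow_add hc0 (-α - 1) 1
        rw [Real.rpow_one] at h
        rw [← h]; congr 1; ring
      rw [hF]
      convert hFd using 1
      · rfl
      · rfl
      · rfl
      simp only [Pi.mul_apply]
      rw [e1, e2, e3, e4, e5]
      field_simp
      ring
    · apply mul_nonneg _ hbβ
      apply div_nonneg _ hβ0.le
      exact mul_nonneg (Real.rpow_nonneg (hw0 s) _) (Real.rpow_nonneg hc0.le _)
  -- monotone on subintervals where w ≠ 0 in the interior
  have key : ∀ a b : ℝ, 0 ≤ a → b ≤ 1 → (∀ s ∈ Ioo a b, w s ≠ 0) → MonotoneOn F (Icc a b) := by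
    intro a b ha hb hne
    have hsub : Icc a b ⊆ Icc (0:ℝ) 1 := Icc_subset_Icc ha hb
    have hsub2 : Ioo a b ⊆ Icc (0:ℝ) 1 := fun x hx => hsub ⟨hx.1.le, hx.2.le⟩
    apply monotoneOn_of_deriv_nonneg (convex_Icc a b) (hFc.mono hsub)
    · intro x hx
      rw [interior_Icc] at hx
      obtain ⟨d, hd, _⟩ := hkey x (hsub2 hx) (hne x hx)
      exact hd.differentiableAt.differentiableWithinAt
    · intro x hx
      rw [interior_Icc] at hx
      obtain ⟨d, hd, hd0⟩ := hkey x (hsub2 hx) (hne x hx)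
      rw [hd.deriv]
      exact hd0
  -- main monotonicity of F
  have hFm : MonotoneOn F (Icc (0:ℝ) 1) := by
    by_cases hall : ∀ s ∈ Icc (0:ℝ) 1, w s ≠ 0
    · exact key 0 1 le_rfl le_rfl (fun s hs => hall s ⟨hs.1.le, hs.2.le⟩)
    · push_neg at hall
      obtain ⟨s₀, hs₀, hw₀⟩ := hall
      have hv₀ : p + s₀ • r = 0 := by
        rw [hwv s₀] at hw₀
        exact norm_eq_zero.mp (pow_eq_zero_iff (n := 2) (by norm_num) |>.mp hw₀)
      by_cases hr0 : r = 0
      · have hp0 : p = 0 := by simpa [hr0] using hv₀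
        have hFz : ∀ s : ℝ, F s = 0 := by
          intro s
          have hws : w s = 0 := by simp [hw, hp0, hr0]
          have hqs : q s = 0 := hq0 s hws
          simp only [hF, hws, hqs,
            Real.zero_rpow (by intro h; rw [div_eq_zero_iff] at h; rcases h with h|h <;> linarith : β / 2 ≠ 0)]
          ring
        intro x hx y hy hxy
        rw [hFz x, hFz y]
      · have hpval : p = -(s₀ • r) := eq_neg_of_add_eq_zero_left hv₀
        have hwne : ∀ s : ℝ, s ≠ s₀ → w s ≠ 0 := by
          intro s hsne
          rw [hwv]
          have hvs : p + s • r = (s - s₀) • r := by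
            rw [hpval, sub_smul]; abel
          rw [hvs, norm_smul, Real.norm_eq_abs]
          apply pow_ne_zero
          exact mul_ne_zero (abs_ne_zero.mpr (sub_ne_zero.mpr hsne)) (norm_ne_zero_iff.mpr hr0)
        have k1 := key 0 s₀ le_rfl hs₀.2 (fun s hsi => hwne s (ne_of_lt hsi.2))
        have k2 := key s₀ 1 hs₀.1 le_rfl (fun s hsi => hwne s (ne_of_gt hsi.1))
        intro x hx y hy hxy
        rcases le_total y s₀ with h | h
        · exact k1 ⟨hx.1, hxy.trans h⟩ ⟨hy.1, h⟩ hxy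
        · rcases le_total x s₀ with h' | h'
          · exact le_trans (k1 ⟨hx.1, h'⟩ ⟨hs₀.1, le_rfl⟩ h')
              (k2 ⟨le_rfl, hs₀.2⟩ ⟨h, hy.2⟩ h)
          · exact k2 ⟨h', hx.2⟩ ⟨h'.trans hxy, hy.2⟩ hxy
  -- conclude
  intro x hx y hy hxy
  have hx' := hEq x hx
  have hy' := hEq y hy
  dsimp only
  rw [hx', hy']
  exact hFm hx hy hxy
end

section
/- Let 1 < β ≤ 2, α > 0, μ ≥ 0, and suppose H(m,p) satisfies: H(m,p) ≥ c₀ |p|^β(m+μ)^{-α} - c₁(1 + m^{α/(β-1)}), |∇_p H(m,p)| ≤ c₂(1 + |p|^{β-1}(m+μ)^{-α}), and ∇_p H(m,p)·p ≥ (1+σ)H(m,p) - c₃(1 + m^{α/(β-1)}), with c₀,c₁,c₂,c₃,σ > 0. Then there exist nonnegative constants C₀, C₁, C₂ (depending only on c₀,…,c₃,σ,α,β,μ) such that for all m ≥ 0 with m+μ > 0 and all p ∈ ℝ^N: m^{α/(β-1)+1}(|∇_p H(m,p)|² - C₀) ≤ C₁ m (∇_p H(m,p)·p - H(m,p) + C₂).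 -/
/-- Weighted max argument: if `y^θ ≤ K` with `0 < θ ≤ 1`, then `y * x^θ ≤ (x+y) * K`. -/
lemma stmt10_key0 (x y K θ : ℝ) (hx : 0 ≤ x) (hy : 0 ≤ y) (hK : 0 < K)
    (hθ0 : 0 < θ) (hθ1 : θ ≤ 1) (h : y ^ θ ≤ K) : y * x ^ θ ≤ (x + y) * K := by
  rcases le_total x y with hxy | hxy
  · have h1 : x ^ θ ≤ y ^ θ := Real.rpow_le_rpow hx hxy hθ0.le
    have h2 : x ^ θ ≤ K := le_trans h1 h
    nlinarith [Real.rpow_nonneg hx θ]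
  · rcases eq_or_lt_of_le hy with hy0 | hy0
    · rw [← hy0]
      have h0 : (0:ℝ) ≤ (x + 0) * K := by positivity
      simpa using h0
    · have hx0 : 0 < x := lt_of_lt_of_le hy0 hxy
      have h1 : y ^ (1 - θ) ≤ x ^ (1 - θ) := Real.rpow_le_rpow hy hxy (by linarith)
      have h2 : y = y ^ (1 - θ) * y ^ θ := by
        rw [← Real.rpow_add hy0, sub_add_cancel, Real.rpow_one]
      have h3 : x ^ (1 - θ) * x ^ θ = x := by
        rw [← Real.rpow_add hx0, sub_add_cancel, Real.rpow_one]
      have h4 : y ^ (1 - θ) * y ^ θ ≤ x ^ (1 - θ) * K :=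
        mul_le_mul h1 h (Real.rpow_nonneg hy θ) (Real.rpow_nonneg hx0.le _)
      calc y * x ^ θ = (y ^ (1 - θ) * y ^ θ) * x ^ θ := by rw [← h2]
        _ ≤ (x ^ (1 - θ) * K) * x ^ θ :=
            mul_le_mul_of_nonneg_right h4 (Real.rpow_nonneg hx θ)
        _ = (x ^ (1 - θ) * x ^ θ) * K := by ring
        _ = x * K := by rw [h3]
        _ ≤ (x + y) * K := by nlinarith

set_option maxHeartbeats 2000000 in
/-- Under the structure conditions (coerc), (grow), (conv), there exist nonnegative constants
`C₀, C₁, C₂` such that `m^{α/(β-1)+1}(|∇_p H|² - C₀) ≤ C₁ m (∇_p H·p - H + C₂)`. -/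
theorem stmt10 (N : ℕ) (hN : 1 ≤ N) (α β μ σ c₀ c₁ c₂ c₃ : ℝ)
    (hβ1 : 1 < β) (hβ2 : β ≤ 2) (hα : 0 < α) (hμ0 : 0 ≤ μ) (hμ1 : μ ≤ 1)
    (hc₀ : 0 < c₀) (hc₁ : 0 < c₁) (hc₂ : 0 < c₂) (hc₃ : 0 < c₃) (hσ : 0 < σ)
    (H : ℝ → EuclideanSpace ℝ (Fin N) → ℝ)
    (Hp : ℝ → EuclideanSpace ℝ (Fin N) → EuclideanSpace ℝ (Fin N))
    (coerc : ∀ (m : ℝ) (p : EuclideanSpace ℝ (Fin N)), 0 ≤ m → 0 < m + μ →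
      c₀ * ‖p‖ ^ β / (m + μ) ^ α - c₁ * (1 + m ^ (α / (β - 1))) ≤ H m p)
    (grow : ∀ (m : ℝ) (p : EuclideanSpace ℝ (Fin N)), 0 ≤ m → 0 < m + μ →
      ‖Hp m p‖ ≤ c₂ * (1 + ‖p‖ ^ (β - 1) / (m + μ) ^ α))
    (conv : ∀ (m : ℝ) (p : EuclideanSpace ℝ (Fin N)), 0 ≤ m → 0 < m + μ →
      (1 + σ) * H m p - c₃ * (1 + m ^ (α / (β - 1))) ≤ (inner ℝ (Hp m p) p : ℝ)) :
    ∃ C₀ C₁ C₂ : ℝ, 0 ≤ C₀ ∧ 0 ≤ C₁ ∧ 0 ≤ C₂ ∧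
      ∀ (m : ℝ) (p : EuclideanSpace ℝ (Fin N)), 0 ≤ m → 0 < m + μ →
        m ^ (α / (β - 1) + 1) * (‖Hp m p‖ ^ 2 - C₀)
          ≤ C₁ * m * ((inner ℝ (Hp m p) p : ℝ) - H m p + C₂) := by
  have hβ0 : (0:ℝ) < β := by linarith
  have hβ1' : (0:ℝ) < β - 1 := by linarith
  set γ : ℝ := α / (β - 1) with hγdef
  have hγpos : 0 < γ := div_pos hα hβ1'
  obtain ⟨C1, hC1pos, hC1'⟩ : ∃ C1 : ℝ, 0 ≤ C1 ∧ C1 * (σ * c₀) = 2 * c₂ ^ 2 :=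
    ⟨2 * c₂ ^ 2 / (σ * c₀), by positivity, by field_simp⟩
  refine ⟨4 * c₂ ^ 2 + C1 * (σ * c₁ + c₃), C1, σ * c₁ + c₃, by positivity, hC1pos,
    by positivity, ?_⟩
  intro m p hm hM
  rcases eq_or_lt_of_le hm with hm0 | hm0
  · rw [← hm0]
    rw [Real.zero_rpow (by positivity : γ + 1 ≠ 0)]
    simp
  set q : ℝ := ‖p‖ with hqdef
  set g : ℝ := ‖Hp m p‖ with hgdef
  have hq : (0:ℝ) ≤ q := norm_nonneg _
  have hMm : m ≤ m + μ := by linarith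
  set A : ℝ := q ^ β / (m + μ) ^ α with hAdef
  have hA0 : (0:ℝ) ≤ A := by positivity
  have hmγ : (0:ℝ) ≤ m ^ γ := Real.rpow_nonneg hm γ
  have hP : m ^ (γ + 1) = m * m ^ γ := by
    rw [Real.rpow_add hm0, Real.rpow_one]; ring
  -- Step A : bound on the square of the gradient
  have hg2 : g ^ 2 ≤ 2 * c₂ ^ 2 + 2 * c₂ ^ 2 * (q ^ (β - 1) / (m + μ) ^ α) ^ 2 := by
    have h := grow m p hm hM
    have hx0 : (0:ℝ) ≤ q ^ (β - 1) / (m + μ) ^ α := by positivity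
    have hgn : (0:ℝ) ≤ g := norm_nonneg _
    nlinarith [sq_nonneg (1 - q ^ (β - 1) / (m + μ) ^ α), sq_nonneg c₂,
      mul_self_nonneg (c₂ * (1 + q ^ (β - 1) / (m + μ) ^ α) - g)]
  -- Step B : the crucial interpolation inequality
  have hB : (m * m ^ γ) * (q ^ (β - 1) / (m + μ) ^ α) ^ 2 ≤ m * A + m * m ^ γ := by
    rcases eq_or_lt_of_le hq with hq0 | hq0
    · rw [← hq0, Real.zero_rpow (ne_of_gt hβ1')]
      rw [zero_div]
      have h0 : (0:ℝ) ≤ m * A + m * m ^ γ := by positivity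
      simpa using h0
    · set θ : ℝ := 2 * (β - 1) / β with hθdef
      have hθ0 : 0 < θ := by positivity
      have hθ1 : θ ≤ 1 := by rw [hθdef, div_le_one hβ0]; linarith
      have hK : (0:ℝ) < (m + μ) ^ (2 * α / β) := Real.rpow_pos_of_pos hM _
      have hyθ : (m ^ γ) ^ θ ≤ (m + μ) ^ (2 * α / β) := by
        rw [← Real.rpow_mul hm]
        have he : γ * θ = 2 * α / β := by
          rw [hθdef, hγdef]; field_simp
        rw [he]
        exact Real.rpow_le_rpow hm hMm (by positivity)
      have hkey := stmt10_key0 A (m ^ γ) ((m + μ) ^ (2 * α / β)) θ hA0 hmγ hK hθ0 hθ1 hyθ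
      have hq2 : (q ^ (β - 1)) ^ 2 = A ^ θ * (m + μ) ^ (α * θ) := by
        have h1 : (q ^ (β - 1)) ^ 2 = q ^ (β * θ) := by
          rw [← Real.rpow_natCast (q ^ (β - 1)) 2, ← Real.rpow_mul hq]
          congr 1
          rw [hθdef]; field_simp; ring
        have h2 : q ^ β = A * (m + μ) ^ α := by
          rw [hAdef, div_mul_cancel₀]
          positivity
        rw [h1, Real.rpow_mul hq, h2, Real.mul_rpow hA0 (by positivity),
          ← Real.rpow_mul (by positivity : (0:ℝ) ≤ m + μ)]
      have hM2 : ((m + μ) ^ α) ^ 2 = (m + μ) ^ (2 * α / β) * (m + μ) ^ (α * θ) := by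
        rw [← Real.rpow_add hM, ← Real.rpow_natCast ((m + μ) ^ α) 2,
          ← Real.rpow_mul hM.le]
        congr 1
        rw [hθdef]; field_simp; ring
      have hθM : (0:ℝ) < (m + μ) ^ (α * θ) := Real.rpow_pos_of_pos hM _
      have hfr : A ^ θ * (m + μ) ^ (α * θ) /
          ((m + μ) ^ (2 * α / β) * (m + μ) ^ (α * θ)) = A ^ θ / (m + μ) ^ (2 * α / β) :=
        mul_div_mul_right _ _ (ne_of_gt hθM)
      rw [div_pow, hq2, hM2, hfr]
      have hdiv : m ^ γ * A ^ θ / (m + μ) ^ (2 * α / β) ≤ A + m ^ γ :=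
        (div_le_iff₀ hK).mpr hkey
      calc (m * m ^ γ) * (A ^ θ / (m + μ) ^ (2 * α / β))
          = m * (m ^ γ * A ^ θ / (m + μ) ^ (2 * α / β)) := by ring
        _ ≤ m * (A + m ^ γ) := mul_le_mul_of_nonneg_left hdiv hm
        _ = m * A + m * m ^ γ := by ring
  -- Step C : lower bound on ∇H·p - H
  have hC : σ * c₀ * A - (σ * c₁ + c₃) * (1 + m ^ γ)
      ≤ (inner ℝ (Hp m p) p : ℝ) - H m p := by
    have h1 := coerc m p hm hM
    have h2 := conv m p hm hM
    have h3 : σ * (c₀ * q ^ β / (m + μ) ^ α - c₁ * (1 + m ^ γ)) ≤ σ * H m p :=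
      mul_le_mul_of_nonneg_left h1 hσ.le
    have h4 : σ * c₀ * A = σ * (c₀ * q ^ β / (m + μ) ^ α) := by
      rw [hAdef]; ring
    rw [h4]
    nlinarith
  -- Combine everything
  rw [hP]
  have H1 : (m * m ^ γ) * g ^ 2 ≤ (m * m ^ γ) *
      (2 * c₂ ^ 2 + 2 * c₂ ^ 2 * (q ^ (β - 1) / (m + μ) ^ α) ^ 2) :=
    mul_le_mul_of_nonneg_left hg2 (by positivity)
  have H2 : 2 * c₂ ^ 2 * ((m * m ^ γ) * (q ^ (β - 1) / (m + μ) ^ α) ^ 2)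
      ≤ 2 * c₂ ^ 2 * (m * A + m * m ^ γ) :=
    mul_le_mul_of_nonneg_left hB (by positivity)
  have H3 : C1 * m * (σ * c₀ * A - (σ * c₁ + c₃) * (1 + m ^ γ))
      ≤ C1 * m * ((inner ℝ (Hp m p) p : ℝ) - H m p) :=
    mul_le_mul_of_nonneg_left hC (by positivity)
  have H4 : C1 * (σ * c₀) * (m * A) = 2 * c₂ ^ 2 * (m * A) := by
    rw [hC1']
  linarith [H1, H2, H3, H4]
end
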